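/- Let 𝔖_m^r ⊆ Γ_{mr} denote the subgroup of permutations (with trivial root-of-unity components) preserving each of the r blocks {(t−1)m+1,…,tm}, t = 1,…,r, i.e. 𝔖_m^r = 𝔖_m × ⋯ × 𝔖_m. Then 𝔖_m^r is a normal subgroup of its normalizer N = N_{Γ_{mr}}(𝔖_m^r), and there is a group isomorphism N/𝔖_m^r ≅ Γ_r = 𝔖_r ⋉ μ_ℓ^r. -/

import Mathlib

/- Statement 6: `𝔖_m^r ⊆ Γ_{mr}` is normal in its normalizer `N`, and
`N / 𝔖_m^r ≅ Γ_r = 𝔖_r ⋉ μ_ℓ^r`. -/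

noncomputable section

/-- The permutation automorphism of `Fin r → G` given by `σ`, i.e. `f ↦ f ∘ σ⁻¹`. -/
def permAut (G : Type*) [Group G] (r : ℕ) (σ : Equiv.Perm (Fin r)) : MulAut (Fin r → G) where
  toFun f := f ∘ σ.symm
  invFun f := f ∘ σ
  left_inv f := by funext i; simp
  right_inv f := by funext i; simp
  map_mul' f g := rfl

/-- The action of `𝔖_r` on `G^r` by permutation of the coordinates. -/
def permHom (G : Type*) [Group G] (r : ℕ) : Equiv.Perm (Fin r) →* MulAut (Fin r → G) where
  toFun := permAut G r
  map_one' := MulEquiv.ext fun _ => rfl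
  map_mul' _ _ := MulEquiv.ext fun _ => rfl

/-- The wreath product `Γ_k = 𝔖_k ⋉ μ_ℓ^k`, where `μ_ℓ ⊆ ℂˣ` is the group of `ℓ`-th
roots of unity. -/
abbrev WreathGamma (ℓ k : ℕ) : Type :=
  (Fin k → rootsOfUnity ℓ ℂ) ⋊[permHom (rootsOfUnity ℓ ℂ) k] Equiv.Perm (Fin k)

namespace St6

variable {m r : ℕ}

/-- block index of `i`. -/
def bIdx (i : Fin (m*r)) : Fin r := ⟨(i:ℕ)/m, Nat.div_lt_of_lt_mul i.2⟩

/-- first element of block `t`. -/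
def emb (hm : 0 < m) (t : Fin r) : Fin (m*r) := ⟨m*(t:ℕ), by
  exact (Nat.mul_lt_mul_left hm).2 t.2⟩

lemma bIdx_emb (hm : 0 < m) (t : Fin r) : bIdx (emb hm t) = t := by
  simp [bIdx, emb, Nat.mul_div_cancel_left _ hm]

lemma emb_bIdx (hm : 0 < m) (i : Fin (m*r)) : ((emb hm (bIdx i) : ℕ))/m = (i:ℕ)/m := by
  simp [bIdx, emb, Nat.mul_div_cancel_left _ hm]

lemma bIdx_eq_iff (i j : Fin (m*r)) : bIdx i = bIdx j ↔ (i:ℕ)/m = (j:ℕ)/m := by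
  simp [bIdx, Fin.ext_iff]

/-- block-permuting condition -/
def BP (m r : ℕ) (σ : Equiv.Perm (Fin (m*r))) : Prop :=
  ∀ i j : Fin (m*r), (i:ℕ)/m = (j:ℕ)/m → ((σ i : ℕ))/m = ((σ j : ℕ))/m

/-- block-constant condition -/
def BC {G : Type*} (m r : ℕ) (f : Fin (m*r) → G) : Prop :=
  ∀ i j : Fin (m*r), (i:ℕ)/m = (j:ℕ)/m → f i = f j

lemma BP.inv (hm : 0 < m) {σ : Equiv.Perm (Fin (m*r))} (hσ : BP m r σ) : BP m r σ⁻¹ := by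
  have hinj : Function.Injective (fun t => bIdx (σ (emb hm t)) : Fin r → Fin r) := by
    rw [Finite.injective_iff_surjective]
    intro t'
    refine ⟨bIdx (σ⁻¹ (emb hm t')), ?_⟩
    show bIdx (σ (emb hm (bIdx (σ⁻¹ (emb hm t'))))) = t'
    rw [show (bIdx (σ (emb hm (bIdx (σ⁻¹ (emb hm t')))))) = bIdx (σ (σ⁻¹ (emb hm t'))) from
      (bIdx_eq_iff _ _).2 (hσ _ _ (emb_bIdx hm _))]
    simp [bIdx_emb hm]
  intro i j hij
  have h1 : ∀ i : Fin (m*r), bIdx (σ (emb hm (bIdx (σ⁻¹ i)))) = bIdx i := by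
    intro i
    rw [bIdx_eq_iff]
    have := hσ _ _ (emb_bIdx hm (σ⁻¹ i))
    simpa using this
  have := hinj (a₁ := bIdx (σ⁻¹ i)) (a₂ := bIdx (σ⁻¹ j)) (by
    show bIdx (σ (emb hm (bIdx (σ⁻¹ i)))) = bIdx (σ (emb hm (bIdx (σ⁻¹ j))))
    rw [h1, h1]; exact (bIdx_eq_iff i j).2 hij)
  exact (bIdx_eq_iff _ _).1 this

/-- the induced permutation on blocks -/
noncomputable def indPerm (hm : 0 < m) (σ : Equiv.Perm (Fin (m*r))) (hσ : BP m r σ) : Equiv.Perm (Fin r) :=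
  Equiv.ofBijective (fun t => bIdx (σ (emb hm t))) (by
    rw [← Finite.injective_iff_bijective, Finite.injective_iff_surjective]
    intro t'
    refine ⟨bIdx (σ⁻¹ (emb hm t')), ?_⟩
    show bIdx (σ (emb hm (bIdx (σ⁻¹ (emb hm t'))))) = t'
    rw [show (bIdx (σ (emb hm (bIdx (σ⁻¹ (emb hm t')))))) = bIdx (σ (σ⁻¹ (emb hm t'))) from
      (bIdx_eq_iff _ _).2 (hσ _ _ (emb_bIdx hm _))]
    simp [bIdx_emb hm])

lemma indPerm_apply (hm : 0 < m) (σ : Equiv.Perm (Fin (m*r))) (hσ : BP m r σ) (t : Fin r) :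
    indPerm hm σ hσ t = bIdx (σ (emb hm t)) := rfl

lemma indPerm_inv_apply (hm : 0 < m) (σ : Equiv.Perm (Fin (m*r))) (hσ : BP m r σ) (t : Fin r) :
    (indPerm hm σ hσ)⁻¹ t = bIdx (σ⁻¹ (emb hm t)) := by
  have : indPerm hm σ hσ (bIdx (σ⁻¹ (emb hm t))) = t := by
    rw [indPerm_apply, show (bIdx (σ (emb hm (bIdx (σ⁻¹ (emb hm t)))))) = bIdx (σ (σ⁻¹ (emb hm t))) from
      (bIdx_eq_iff _ _).2 (hσ _ _ (emb_bIdx hm _))]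
    simp [bIdx_emb hm]
  rw [Equiv.Perm.inv_eq_iff_eq]
  exact this.symm

/-- the lift of a permutation of blocks -/
def liftPerm (hm : 0 < m) (τ : Equiv.Perm (Fin r)) : Equiv.Perm (Fin (m*r)) where
  toFun i := ⟨m * (τ (bIdx i) : ℕ) + (i:ℕ) % m, by
    have h1 : m * ((τ (bIdx i) : ℕ) + 1) ≤ m * r := Nat.mul_le_mul_left m (τ (bIdx i)).2
    have h2 : (i:ℕ) % m < m := Nat.mod_lt _ hm
    have h3 : m * ((τ (bIdx i) : ℕ) + 1) = m * (τ (bIdx i) : ℕ) + m := Nat.mul_succ _ _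
    omega⟩
  invFun i := ⟨m * (τ⁻¹ (bIdx i) : ℕ) + (i:ℕ) % m, by
    have h1 : m * ((τ⁻¹ (bIdx i) : ℕ) + 1) ≤ m * r := Nat.mul_le_mul_left m (τ⁻¹ (bIdx i)).2
    have h2 : (i:ℕ) % m < m := Nat.mod_lt _ hm
    have h3 : m * ((τ⁻¹ (bIdx i) : ℕ) + 1) = m * (τ⁻¹ (bIdx i) : ℕ) + m := Nat.mul_succ _ _
    omega⟩
  left_inv i := by
    have h2 : (i:ℕ) % m < m := Nat.mod_lt _ hm
    ext
    simp only [bIdx, Nat.mul_add_div hm, Nat.mul_add_mod, Nat.div_eq_of_lt h2,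
      Nat.mod_eq_of_lt h2, Nat.add_zero]
    simp [Fin.eta, Nat.div_add_mod]
  right_inv i := by
    have h2 : (i:ℕ) % m < m := Nat.mod_lt _ hm
    ext
    simp only [bIdx, Nat.mul_add_div hm, Nat.mul_add_mod, Nat.div_eq_of_lt h2,
      Nat.mod_eq_of_lt h2, Nat.add_zero]
    simp [Fin.eta, Nat.div_add_mod]

lemma liftPerm_val (hm : 0 < m) (τ : Equiv.Perm (Fin r)) (i : Fin (m*r)) :
    ((liftPerm hm τ i : ℕ)) = m * (τ (bIdx i) : ℕ) + (i:ℕ) % m := rfl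

lemma bIdx_liftPerm (hm : 0 < m) (τ : Equiv.Perm (Fin r)) (i : Fin (m*r)) :
    bIdx (liftPerm hm τ i) = τ (bIdx i) := by
  have h2 : (i:ℕ) % m < m := Nat.mod_lt _ hm
  ext
  simp [bIdx, liftPerm_val, Nat.mul_add_div hm, Nat.div_eq_of_lt h2]

variable (ℓ : ℕ)

/-- the homomorphism from the normalizer to `Γ_r`. -/
noncomputable def toGamma (hm : 0 < m) (N : Subgroup (WreathGamma ℓ (m*r)))
    (hN : ∀ x : WreathGamma ℓ (m*r), x ∈ N → BP m r x.right ∧ BC m r x.left) :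
    ↥N →* WreathGamma ℓ r where
  toFun n := ⟨fun t => n.1.left (emb hm t), indPerm hm n.1.right (hN _ n.2).1⟩
  map_one' := by
    refine SemidirectProduct.ext ?_ ?_
    · funext t
      simp
    · refine Equiv.ext fun t => ?_
      show bIdx ((1 : WreathGamma ℓ (m*r)).right (emb hm t)) = t
      simp [bIdx_emb hm]
  map_mul' a b := by
    refine SemidirectProduct.ext ?_ ?_
    · funext t
      show ((a*b).1).left (emb hm t) = _
      have hmul : ((a*b).1) = a.1 * b.1 := rfl
      rw [hmul, SemidirectProduct.mul_left]
      show a.1.left (emb hm t) * b.1.left ((a.1.right)⁻¹ (emb hm t)) =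
        a.1.left (emb hm t) * b.1.left (emb hm ((indPerm hm a.1.right (hN _ a.2).1)⁻¹ t))
      congr 1
      apply (hN _ b.2).2
      rw [indPerm_inv_apply, emb_bIdx hm]
    · show indPerm hm ((a*b).1).right (hN _ (a*b).2).1 = indPerm hm a.1.right (hN _ a.2).1 * indPerm hm b.1.right (hN _ b.2).1
      refine Equiv.ext fun t => ?_
      have hmul : ((a*b).1) = a.1 * b.1 := rfl
      show bIdx (((a*b).1).right (emb hm t)) = bIdx (a.1.right (emb hm (bIdx (b.1.right (emb hm t)))))
      rw [hmul, SemidirectProduct.mul_right]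
      rw [bIdx_eq_iff]
      exact ((hN _ a.2).1 _ _ (emb_bIdx hm _)).symm

def blockPerms (m r : ℕ) : Subgroup (Equiv.Perm (Fin (m*r))) where
  carrier := {w | ∀ i : Fin (m*r), ((w i : ℕ))/m = (i:ℕ)/m}
  one_mem' := fun i => rfl
  mul_mem' := fun {w v} hw hv i => by
    show ((w (v i) : ℕ))/m = _
    rw [hw, hv]
  inv_mem' := fun {w} hw i => by
    have := hw (w⁻¹ i)
    simpa using this.symm

def Kgrp (ℓ m r : ℕ) : Subgroup (WreathGamma ℓ (m*r)) :=
  (blockPerms m r).map SemidirectProduct.inr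

lemma mem_Kgrp (x : WreathGamma ℓ (m*r)) :
    x ∈ Kgrp ℓ m r ↔ x.left = 1 ∧ x.right ∈ blockPerms m r := by
  constructor
  · rintro ⟨w, hw, rfl⟩
    exact ⟨rfl, hw⟩
  · rintro ⟨h1, h2⟩
    exact ⟨x.right, h2, SemidirectProduct.ext h1.symm rfl⟩

lemma conj_mem_Kgrp (hm : 0 < m) (n : WreathGamma ℓ (m*r))
    (hBP : BP m r n.right) (hBC : BC m r n.left)
    (g : WreathGamma ℓ (m*r)) (hg : g ∈ Kgrp ℓ m r) : n * g * n⁻¹ ∈ Kgrp ℓ m r := by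
  rw [mem_Kgrp] at hg ⊢
  obtain ⟨h1, h2⟩ := hg
  constructor
  · -- left component is 1
    have hl : (n * g * n⁻¹).left =
        n.left * (permHom _ _ (n.right * g.right) ((permHom _ _ n.right⁻¹) n.left⁻¹)) := by
      simp [SemidirectProduct.mul_left, SemidirectProduct.inv_left, h1,
        SemidirectProduct.mul_right]
    rw [hl]
    funext i
    have key : n.left (n.right ((g.right)⁻¹ ((n.right)⁻¹ i))) = n.left i := by
      apply hBC
      rw [hBP _ _ (((blockPerms m r).inv_mem h2) ((n.right)⁻¹ i))]
      simp
    show n.left i * (n.left (n.right ((g.right)⁻¹ ((n.right)⁻¹ i))))⁻¹ = 1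
    rw [key, mul_inv_cancel]
  · -- right component
    have hr : (n * g * n⁻¹).right = n.right * g.right * (n.right)⁻¹ := by
      simp [SemidirectProduct.mul_right, SemidirectProduct.inv_right]
    rw [hr]
    intro i
    show ((n.right (g.right ((n.right)⁻¹ i)) : ℕ))/m = _
    rw [hBP _ _ (h2 ((n.right)⁻¹ i))]
    simp

lemma swap_mem_blockPerms {a b : Fin (m*r)} (hab : (a:ℕ)/m = (b:ℕ)/m) :
    Equiv.swap a b ∈ blockPerms m r := by
  intro i
  rcases eq_or_ne i a with rfl | hia
  · rw [Equiv.swap_apply_left]; exact hab.symm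
  rcases eq_or_ne i b with rfl | hib
  · rw [Equiv.swap_apply_right]; exact hab
  · rw [Equiv.swap_apply_of_ne_of_ne hia hib]

lemma mem_normalizer_iff' (hm : 0 < m) (x : WreathGamma ℓ (m*r)) :
    x ∈ (Subgroup.normalizer (Kgrp ℓ m r : Set (WreathGamma ℓ (m*r)))) ↔ BP m r x.right ∧ BC m r x.left := by
  constructor
  · intro hx
    rw [Subgroup.mem_normalizer_iff] at hx
    -- key consequence: for a b in the same block, components of the conjugate of swap a b
    have key : ∀ a b : Fin (m*r), (a:ℕ)/m = (b:ℕ)/m →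
        (((x.right (Equiv.swap a b a) : ℕ))/m = ((x.right a : ℕ))/m ∧
          ∀ i, x.left (x.right (Equiv.swap a b ((x.right)⁻¹ i))) = x.left i) := by
      intro a b hab
      have hsw : SemidirectProduct.inr (Equiv.swap a b) ∈ Kgrp ℓ m r :=
        ⟨_, swap_mem_blockPerms hab, rfl⟩
      have hc := (hx _).1 hsw
      rw [mem_Kgrp] at hc
      obtain ⟨h1, h2⟩ := hc
      have hl : (x * SemidirectProduct.inr (Equiv.swap a b) * x⁻¹).left =
          x.left * (permHom _ _ (x.right * Equiv.swap a b)
            ((permHom _ _ (x.right)⁻¹) x.left⁻¹)) := by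
        simp [SemidirectProduct.mul_left, SemidirectProduct.inv_left,
          SemidirectProduct.mul_right]
      have hr : (x * SemidirectProduct.inr (Equiv.swap a b) * x⁻¹).right =
          x.right * Equiv.swap a b * (x.right)⁻¹ := by
        simp [SemidirectProduct.mul_right, SemidirectProduct.inv_right]
      constructor
      · have := h2 (x.right a)
        rw [hr] at this
        show _ = _
        calc ((x.right (Equiv.swap a b a) : ℕ))/m
            = ((x.right (Equiv.swap a b ((x.right)⁻¹ (x.right a))) : ℕ))/m := by simp
          _ = ((x.right a : ℕ))/m := this
      · intro i
        have := congrFun (hl ▸ h1) i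
        show _ = _
        have h3 : x.left i * (x.left (x.right (Equiv.swap a b ((x.right)⁻¹ i))))⁻¹ = 1 := by
          simp [permHom, permAut] at this
          exact this
        have := mul_inv_eq_one.mp h3
        exact this.symm
    have hBP : BP m r x.right := by
      intro i j hij
      have := (key i j hij).1
      rw [Equiv.swap_apply_left] at this
      exact this.symm
    refine ⟨hBP, ?_⟩
    intro i j hij
    have hij' : ((x.right⁻¹ i : ℕ))/m = ((x.right⁻¹ j : ℕ))/m := hBP.inv hm i j hij
    have := (key (x.right⁻¹ i) (x.right⁻¹ j) hij').2 j
    rw [Equiv.swap_apply_right] at this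
    simpa using this
  · rintro ⟨hBP, hBC⟩
    rw [Subgroup.mem_normalizer_iff]
    intro g
    constructor
    · intro hg
      exact conj_mem_Kgrp ℓ hm x hBP hBC g hg
    · intro hc
      have hBP' : BP m r (x⁻¹).right := by
        have : (x⁻¹).right = (x.right)⁻¹ := by simp [SemidirectProduct.inv_right]
        rw [this]; exact hBP.inv hm
      have hBC' : BC m r (x⁻¹).left := by
        intro i j hij
        have : (x⁻¹).left = (permHom _ _ (x.right)⁻¹) x.left⁻¹ := by
          simp [SemidirectProduct.inv_left]
        rw [this]
        show (x.left (x.right i))⁻¹ = (x.left (x.right j))⁻¹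
        rw [hBC _ _ (hBP _ _ hij)]
      have := conj_mem_Kgrp ℓ hm x⁻¹ hBP' hBC' _ hc
      have h2 : x⁻¹ * (x * g * x⁻¹) * x⁻¹⁻¹ = g := by group
      rwa [h2] at this

lemma ker_toGamma (hm : 0 < m) (hN : ∀ x : WreathGamma ℓ (m*r), x ∈ (Subgroup.normalizer (Kgrp ℓ m r : Set (WreathGamma ℓ (m*r)))) →
      BP m r x.right ∧ BC m r x.left) :
    (toGamma ℓ hm (Subgroup.normalizer (Kgrp ℓ m r : Set (WreathGamma ℓ (m*r)))) hN).ker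
      = (Kgrp ℓ m r).subgroupOf (Subgroup.normalizer (Kgrp ℓ m r : Set (WreathGamma ℓ (m*r)))) := by
  ext n
  simp only [MonoidHom.mem_ker, Subgroup.mem_subgroupOf]
  rw [mem_Kgrp]
  constructor
  · intro h1
    have hl := congrArg SemidirectProduct.left h1
    have hr := congrArg SemidirectProduct.right h1
    constructor
    · funext i
      have hBC := (hN _ n.2).2
      have h2 := congrFun hl (bIdx i)
      show n.1.left i = 1
      calc n.1.left i = n.1.left (emb hm (bIdx i)) := hBC _ _ (emb_bIdx hm i).symm
        _ = 1 := h2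
    · intro i
      have hBP := (hN _ n.2).1
      have h3 := congrArg (fun (e : Equiv.Perm (Fin r)) => ((e (bIdx i) : ℕ))) hr
      show ((n.1.right i : ℕ))/m = (i:ℕ)/m
      have h4 : ((n.1.right (emb hm (bIdx i)) : ℕ))/m = (i:ℕ)/m := by
        have : (bIdx (n.1.right (emb hm (bIdx i))) : ℕ) = ((bIdx i : ℕ)) := h3
        simpa [bIdx] using this
      rw [hBP _ _ (emb_bIdx hm i).symm, h4]
  · rintro ⟨h1, h2⟩
    refine SemidirectProduct.ext ?_ ?_
    · funext t
      show n.1.left (emb hm t) = 1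
      rw [h1]
      rfl
    · refine Equiv.ext fun t => ?_
      show bIdx (n.1.right (emb hm t)) = t
      rw [show bIdx (n.1.right (emb hm t)) = bIdx (emb hm t) from (bIdx_eq_iff _ _).2 (h2 _),
        bIdx_emb hm]

lemma surj_toGamma (hm : 0 < m) (hN : ∀ x : WreathGamma ℓ (m*r), x ∈ (Subgroup.normalizer (Kgrp ℓ m r : Set (WreathGamma ℓ (m*r)))) →
      BP m r x.right ∧ BC m r x.left) :
    Function.Surjective (toGamma ℓ hm (Subgroup.normalizer (Kgrp ℓ m r : Set (WreathGamma ℓ (m*r)))) hN) := by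
  intro y
  set x : WreathGamma ℓ (m*r) := ⟨fun i => y.left (bIdx i), liftPerm hm y.right⟩ with hxdef
  have hBP : BP m r x.right := by
    intro i j hij
    have h1 : bIdx (liftPerm hm y.right i) = bIdx (liftPerm hm y.right j) := by
      rw [bIdx_liftPerm, bIdx_liftPerm, (bIdx_eq_iff i j).2 hij]
    exact (bIdx_eq_iff _ _).1 h1
  have hBC : BC m r x.left := by
    intro i j hij
    show y.left (bIdx i) = y.left (bIdx j)
    rw [(bIdx_eq_iff i j).2 hij]
  have hx : x ∈ (Subgroup.normalizer (Kgrp ℓ m r : Set (WreathGamma ℓ (m*r)))) := (mem_normalizer_iff' ℓ hm x).2 ⟨hBP, hBC⟩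
  refine ⟨⟨x, hx⟩, ?_⟩
  refine SemidirectProduct.ext ?_ ?_
  · funext t
    show y.left (bIdx (emb hm t)) = y.left t
    rw [bIdx_emb hm]
  · refine Equiv.ext fun t => ?_
    show bIdx (liftPerm hm y.right (emb hm t)) = y.right t
    rw [bIdx_liftPerm, bIdx_emb hm]

end St6

open St6 in
theorem statement_6 (ℓ m r : ℕ) (hℓ : 1 ≤ ℓ) (hm : 1 ≤ m) (hr : 1 ≤ r)
    -- `K = 𝔖_m^r`, the subgroup of permutations (with trivial root-of-unity components)
    -- preserving each of the `r` blocks of size `m`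
    (K : Subgroup (WreathGamma ℓ (m * r)))
    (hK : K = Subgroup.closure
      {x : WreathGamma ℓ (m * r) | ∃ w : Equiv.Perm (Fin (m * r)),
        (∀ i : Fin (m * r), ((w i : ℕ) / m) = ((i : ℕ) / m)) ∧
        x = SemidirectProduct.inr w}) :
    (K.subgroupOf (Subgroup.normalizer (K : Set (WreathGamma ℓ (m * r))))).Normal ∧
    Nonempty ((↥(Subgroup.normalizer (K : Set (WreathGamma ℓ (m * r)))) ⧸ K.subgroupOf (Subgroup.normalizer (K : Set (WreathGamma ℓ (m * r))))) ≃* WreathGamma ℓ r) := by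
  have hm0 : 0 < m := hm
  have hset : {x : WreathGamma ℓ (m * r) | ∃ w : Equiv.Perm (Fin (m * r)),
        (∀ i : Fin (m * r), ((w i : ℕ) / m) = ((i : ℕ) / m)) ∧
        x = SemidirectProduct.inr w}
      = (SemidirectProduct.inr : _ →* WreathGamma ℓ (m*r)) '' ↑(blockPerms m r) := by
    ext x
    constructor
    · rintro ⟨w, hw, rfl⟩
      exact ⟨w, hw, rfl⟩
    · rintro ⟨w, hw, rfl⟩
      exact ⟨w, hw, rfl⟩
  have hKeq : K = Kgrp ℓ m r := by
    rw [hK, hset, ← MonoidHom.map_closure, Subgroup.closure_eq]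
    rfl
  subst hKeq
  have hN : ∀ x : WreathGamma ℓ (m*r), x ∈ (Subgroup.normalizer (Kgrp ℓ m r : Set (WreathGamma ℓ (m*r)))) →
      BP m r x.right ∧ BC m r x.left :=
    fun x hx => (mem_normalizer_iff' ℓ hm0 x).1 hx
  refine ⟨Subgroup.normal_in_normalizer, ?_⟩
  exact ⟨(QuotientGroup.quotientMulEquivOfEq (ker_toGamma ℓ hm0 hN).symm).trans
    (QuotientGroup.quotientKerEquivOfSurjective _ (surj_toGamma ℓ hm0 hN))⟩
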